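/- Let G be an (r,s)-directed hypergraph. The adjacency tensor A(G) is weakly irreducible if and only if G is anadiplosis connected. -/

import Mathlib

/-- A directed hypergraph on a vertex type `V`, with `N` arcs, each arc having a
tail of size `r` and a head of size `s`, disjoint from each other. -/
structure DirHG (V : Type) (N r s : ℕ) where
  tail : Fin N → Finset V
  head : Fin N → Finset V
  disj : ∀ e, Disjoint (tail e) (head e)
  tail_card : ∀ e, (tail e).card = r
  head_card : ∀ e, (head e).card = s

namespace DirHG

variable {V : Type} {N r s : ℕ}

/-- The `b`-side of an arc: its tail if `b = true`, its head if `b = false`. -/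
def side (G : DirHG V N r s) (b : Bool) (e : Fin N) : Finset V :=
  if b then G.tail e else G.head e

/-- `AnaWalk G u bu w bw L` means: the list of arcs `L` is an anadiplosis walk from
`u` (lying in the `bu`-side of the first arc) to `w` (lying in the `bw`-side of the
last arc), where every intermediate vertex lies in the same side (tail or head) of
the two consecutive arcs it joins. -/
inductive AnaWalk (G : DirHG V N r s) : V → Bool → V → Bool → List (Fin N) → Prop
  | single (e : Fin N) (u w : V) (bu bw : Bool)
      (hu : u ∈ G.side bu e) (hw : w ∈ G.side bw e) : AnaWalk G u bu w bw [e]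
  | cons (e : Fin N) (u v w : V) (bu b bw : Bool) (L : List (Fin N))
      (hu : u ∈ G.side bu e) (hv : v ∈ G.side b e)
      (hL : AnaWalk G v b w bw L) : AnaWalk G u bu w bw (e :: L)

/-- `G` is anadiplosis connected: any two distinct vertices of `T(G) ∪ H(G)` are
joined by an anadiplosis walk, and every vertex of `T(G) ∩ H(G)` lies on an
anadiplosis semi-cycle (a closed anadiplosis walk with at least two pairwise
distinct arcs, starting in a tail and ending in a head or vice versa). -/
def AnaConnected (G : DirHG V N r s) : Prop :=
  (∀ u v : V, u ≠ v →
      (∃ e, u ∈ G.tail e ∨ u ∈ G.head e) → (∃ e, v ∈ G.tail e ∨ v ∈ G.head e) →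
      ∃ bu bv L, AnaWalk G u bu v bv L) ∧
  (∀ u : V, (∃ e, u ∈ G.tail e) → (∃ f, u ∈ G.head f) →
      ∃ L : List (Fin N), L.Nodup ∧ 2 ≤ L.length ∧
        (AnaWalk G u true u false L ∨ AnaWalk G u false u true L))

/-- Membership of a vertex of the bipartite split (a tail-copy `Sum.inl u` or a
head-copy `Sum.inr v`) in an arc. -/
def splitMem (G : DirHG V N r s) : V ⊕ V → Fin N → Prop
  | Sum.inl u, e => u ∈ G.tail e
  | Sum.inr v, e => v ∈ G.head e

/-- Adjacency in the underlying hypergraph of the bipartite split `B(G)`: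
two vertices are adjacent when some arc contains both. -/
def splitAdj (G : DirHG V N r s) (a b : V ⊕ V) : Prop :=
  ∃ e, G.splitMem a e ∧ G.splitMem b e

/-- Connectedness of the underlying hypergraph of the bipartite split `B(G)`:
any two of its vertices are joined by a walk. -/
def SplitConnected (G : DirHG V N r s) : Prop :=
  ∀ a b, (∃ e, G.splitMem a e) → (∃ e, G.splitMem b e) →
    Relation.ReflTransGen G.splitAdj a b

end DirHG

namespace DirHG

/-- Adjacency in the bipartite graph `G(A)` associated with the adjacency tensor:
a tail-index `i` and a head-index `j` are adjacent iff some arc `e` has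
`i ∈ T(e)` and `j ∈ H(e)` (i.e. some entry of the tensor containing both
indices is positive). -/
def tensorAdj (G : DirHG V N r s) (a b : V ⊕ V) : Prop :=
  ∃ e, ∃ i ∈ G.tail e, ∃ j ∈ G.head e,
    ((a = Sum.inl i ∧ b = Sum.inr j) ∨ (a = Sum.inr j ∧ b = Sum.inl i))

/-- The adjacency tensor of `G` is weakly irreducible iff its associated bipartite
graph `G(A)` is connected. -/
def WeaklyIrreducible (G : DirHG V N r s) : Prop :=
  ∀ a b, (∃ e, G.splitMem a e) → (∃ e, G.splitMem b e) →
    Relation.ReflTransGen G.tensorAdj a b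

end DirHG

namespace DirHG

variable {V : Type} {N r s : ℕ} {G : DirHG V N r s}

/-- The copy of a vertex on side `b` of the bipartite split. -/
def cop (u : V) (b : Bool) : V ⊕ V := if b then Sum.inl u else Sum.inr u

/-- Underlying vertex of a split vertex. -/
def vtx : V ⊕ V → V
  | Sum.inl u => u
  | Sum.inr u => u

/-- Side tag of a split vertex. -/
def tg : V ⊕ V → Bool
  | Sum.inl _ => true
  | Sum.inr _ => false

@[simp] lemma vtx_cop (u : V) (b : Bool) : vtx (cop u b) = u := by
  cases b <;> rfl

@[simp] lemma tg_cop (u : V) (b : Bool) : tg (cop u b) = b := by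
  cases b <;> rfl

@[simp] lemma cop_vtx_tg (a : V ⊕ V) : cop (vtx a) (tg a) = a := by
  cases a <;> rfl

lemma splitMem_iff (a : V ⊕ V) (e : Fin N) :
    G.splitMem a e ↔ vtx a ∈ G.side (tg a) e := by
  cases a <;> simp [splitMem, vtx, tg, side]

lemma splitMem_cop (u : V) (b : Bool) (e : Fin N) :
    G.splitMem (cop u b) e ↔ u ∈ G.side b e := by
  cases b <;> simp [splitMem, cop, side]

lemma tensorAdj_symm : Symmetric G.tensorAdj := by
  rintro a b ⟨e, i, hi, j, hj, h | h⟩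
  · exact ⟨e, i, hi, j, hj, Or.inr ⟨h.2, h.1⟩⟩
  · exact ⟨e, i, hi, j, hj, Or.inl ⟨h.2, h.1⟩⟩

lemma rtg_symm {a b : V ⊕ V} (h : Relation.ReflTransGen G.tensorAdj a b) :
    Relation.ReflTransGen G.tensorAdj b a :=
  (@Relation.ReflTransGen.stdSymm _ _ ⟨fun _ _ h => tensorAdj_symm h⟩).symm _ _ h

/-- Two vertices in the same arc (on any sides) are connected in `G(A)`. -/
lemma inArc (hr : 0 < r) (hs : 0 < s) {u w : V} {bu bw : Bool} {e : Fin N}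
    (hu : u ∈ G.side bu e) (hw : w ∈ G.side bw e) :
    Relation.ReflTransGen G.tensorAdj (cop u bu) (cop w bw) := by
  obtain ⟨i, hi⟩ : (G.tail e).Nonempty := Finset.card_pos.1 (by rw [G.tail_card]; exact hr)
  obtain ⟨j, hj⟩ : (G.head e).Nonempty := Finset.card_pos.1 (by rw [G.head_card]; exact hs)
  cases bu <;> cases bw <;> simp [side] at hu hw <;> simp [cop]
  · exact Relation.ReflTransGen.trans
      (Relation.ReflTransGen.single ⟨e, i, hi, u, hu, Or.inr ⟨rfl, rfl⟩⟩)
      (Relation.ReflTransGen.single ⟨e, i, hi, w, hw, Or.inl ⟨rfl, rfl⟩⟩)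
  · exact Relation.ReflTransGen.single ⟨e, w, hw, u, hu, Or.inr ⟨rfl, rfl⟩⟩
  · exact Relation.ReflTransGen.single ⟨e, u, hu, w, hw, Or.inl ⟨rfl, rfl⟩⟩
  · exact Relation.ReflTransGen.trans
      (Relation.ReflTransGen.single ⟨e, u, hu, j, hj, Or.inl ⟨rfl, rfl⟩⟩)
      (Relation.ReflTransGen.single ⟨e, w, hw, j, hj, Or.inr ⟨rfl, rfl⟩⟩)

lemma walkToPath (hr : 0 < r) (hs : 0 < s) {u w : V} {bu bw : Bool} {L : List (Fin N)}
    (h : AnaWalk G u bu w bw L) :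
    Relation.ReflTransGen G.tensorAdj (cop u bu) (cop w bw) := by
  induction h with
  | single e u w bu bw hu hw => exact inArc hr hs hu hw
  | cons e u v w bu b bw L hu hv hL ih => exact (inArc hr hs hu hv).trans ih

lemma tensorAdj_mem {a b : V ⊕ V} (h : G.tensorAdj a b) :
    ∃ e, vtx a ∈ G.side (tg a) e ∧ vtx b ∈ G.side (tg b) e := by
  obtain ⟨e, i, hi, j, hj, ⟨rfl, rfl⟩ | ⟨rfl, rfl⟩⟩ := h
  · exact ⟨e, by simpa [vtx, tg, side] using ⟨hi, hj⟩⟩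
  · exact ⟨e, by simpa [vtx, tg, side] using ⟨hj, hi⟩⟩

lemma ana_append {u v : V} {bu bv : Bool} {L : List (Fin N)}
    (h : AnaWalk G u bu v bv L) :
    ∀ {w : V} {bw : Bool} {e : Fin N}, v ∈ G.side bv e → w ∈ G.side bw e →
      AnaWalk G u bu w bw (L ++ [e]) := by
  induction h with
  | single e' u' v' bu' bv' hu' hv' =>
      intro w bw e hv hw
      exact AnaWalk.cons e' u' v' w bu' bv' bw [e] hu' hv'
        (AnaWalk.single e v' w bv' bw hv hw)
  | cons e' u' x v' bu' b' bv' L' hu' hx hL ih =>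
      intro w bw e hv hw
      exact AnaWalk.cons e' u' x w bu' b' bw (L' ++ [e]) hu' hx (ih hv hw)

lemma pathToWalk {a b : V ⊕ V} (h : Relation.ReflTransGen G.tensorAdj a b) :
    a = b ∨ ∃ L, AnaWalk G (vtx a) (tg a) (vtx b) (tg b) L := by
  induction h with
  | refl => exact Or.inl rfl
  | tail hab hmb ih =>
      obtain ⟨e, h1, h2⟩ := tensorAdj_mem hmb
      rcases ih with rfl | ⟨L, hL⟩
      · exact Or.inr ⟨_, AnaWalk.single e _ _ _ _ h1 h2⟩
      · exact Or.inr ⟨L ++ [e], ana_append hL h1 h2⟩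

lemma walk_ends {u w : V} {bu bw : Bool} {L : List (Fin N)}
    (h : AnaWalk G u bu w bw L) :
    (∃ e, u ∈ G.side bu e) ∧ ∃ e, w ∈ G.side bw e := by
  induction h with
  | single e u w bu bw hu hw => exact ⟨⟨e, hu⟩, ⟨e, hw⟩⟩
  | cons e u v w bu b bw L hu hv hL ih => exact ⟨⟨e, hu⟩, ih.2⟩

lemma walk_ne_nil {u w : V} {bu bw : Bool} {L : List (Fin N)}
    (h : AnaWalk G u bu w bw L) : L ≠ [] := by
  cases h <;> simp

/-- restart a walk at an arc occurring in it. -/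
lemma restart {v w : V} {b bw : Bool} {L : List (Fin N)}
    (h : AnaWalk G v b w bw L) {e : Fin N} (he : e ∈ L)
    {u : V} {bu : Bool} (hu : u ∈ G.side bu e) :
    ∃ L₂, (e :: L₂) <:+ L ∧ AnaWalk G u bu w bw (e :: L₂) := by
  induction h with
  | single e' v' w' b' bw' hv' hw' =>
      simp only [List.mem_singleton] at he
      subst he
      exact ⟨[], List.suffix_refl _, AnaWalk.single _ u w' bu bw' hu hw'⟩
  | cons e' v' x w' b' bx bw' L' hv' hx hL ih =>
      rcases List.mem_cons.1 he with rfl | he'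
      · exact ⟨L', List.suffix_refl _, AnaWalk.cons _ u x w' bu bx bw' L' hu hx hL⟩
      · obtain ⟨L₂, hsuf, hwalk⟩ := ih he'
        exact ⟨L₂, hsuf.trans (List.suffix_cons _ _), hwalk⟩

lemma dedup {u w : V} {bu bw : Bool} {L : List (Fin N)}
    (h : AnaWalk G u bu w bw L) :
    ∃ L', L'.Nodup ∧ AnaWalk G u bu w bw L' := by
  induction h with
  | single e u w bu bw hu hw => exact ⟨[e], List.nodup_singleton e, AnaWalk.single e u w bu bw hu hw⟩
  | cons e u v w bu b bw L hu hv hL ih =>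
      obtain ⟨L', nd, hw'⟩ := ih
      by_cases he : e ∈ L'
      · obtain ⟨L₂, hsuf, hwalk⟩ := restart hw' he hu
        exact ⟨e :: L₂, nd.sublist hsuf.sublist, hwalk⟩
      · exact ⟨e :: L', List.nodup_cons.2 ⟨he, nd⟩,
          AnaWalk.cons e u v w bu b bw L' hu hv hw'⟩

lemma two_le_of_cross {u : V} {bu bw : Bool} {L : List (Fin N)}
    (h : AnaWalk G u bu u bw L) (hb : bu ≠ bw) : 2 ≤ L.length := by
  rcases L with _ | ⟨e, _ | ⟨e', L'⟩⟩
  · exact absurd rfl (walk_ne_nil h)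
  · exfalso
    cases h with
    | single _ _ _ _ _ hu hw =>
        cases bu <;> cases bw <;> simp at hb <;> simp [side] at hu hw
        · exact Finset.disjoint_left.1 (G.disj e) hw hu
        · exact Finset.disjoint_left.1 (G.disj e) hu hw
    | cons _ _ _ _ _ _ _ _ _ _ hL => exact absurd rfl (walk_ne_nil hL)
  · simp

end DirHG

/-- The adjacency tensor of an `(r,s)`-directed hypergraph `G` is weakly
irreducible if and only if `G` is anadiplosis connected. -/

theorem weaklyIrreducible_iff_anaConnected (V : Type) (N r s : ℕ)
    (hr : 0 < r) (hs : 0 < s) (G : DirHG V N r s) :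
    G.WeaklyIrreducible ↔ G.AnaConnected := by
  constructor
  · intro WI
    constructor
    · rintro u v huv ⟨ea, ha⟩ ⟨eb, hb⟩
      obtain ⟨b1, hu⟩ : ∃ b, u ∈ G.side b ea := by
        rcases ha with h | h
        · exact ⟨true, by simpa [DirHG.side] using h⟩
        · exact ⟨false, by simpa [DirHG.side] using h⟩
      obtain ⟨b2, hv⟩ : ∃ b, v ∈ G.side b eb := by
        rcases hb with h | h
        · exact ⟨true, by simpa [DirHG.side] using h⟩
        · exact ⟨false, by simpa [DirHG.side] using h⟩
      have hpath := WI (DirHG.cop u b1) (DirHG.cop v b2)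
        ⟨ea, (G.splitMem_cop u b1 ea).2 hu⟩ ⟨eb, (G.splitMem_cop v b2 eb).2 hv⟩
      rcases DirHG.pathToWalk hpath with heq | ⟨L, hL⟩
      · exact absurd (by simpa using congrArg DirHG.vtx heq) huv
      · refine ⟨b1, b2, L, ?_⟩
        simpa using hL
    · rintro u ⟨e, he⟩ ⟨f, hf⟩
      have hpath := WI (Sum.inl u) (Sum.inr u) ⟨e, he⟩ ⟨f, hf⟩
      rcases DirHG.pathToWalk hpath with heq | ⟨L, hL⟩
      · exact absurd heq (by simp)
      · have hL' : G.AnaWalk u true u false L := by simpa [DirHG.vtx, DirHG.tg] using hL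
        obtain ⟨L', nd, hw⟩ := DirHG.dedup hL'
        exact ⟨L', nd, DirHG.two_le_of_cross hw (by simp), Or.inl hw⟩
  · intro AC
    have crossAll : ∀ (u : V) (et eh : Fin N), u ∈ G.tail et → u ∈ G.head eh →
        Relation.ReflTransGen G.tensorAdj (Sum.inl u) (Sum.inr u) ∧
        Relation.ReflTransGen G.tensorAdj (Sum.inr u) (Sum.inl u) := by
      intro u et eh ht hh
      obtain ⟨L, _, _, hw | hw⟩ := AC.2 u ⟨et, ht⟩ ⟨eh, hh⟩
      · have h := DirHG.walkToPath hr hs hw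
        simp only [DirHG.cop, if_true, if_false] at h
        exact ⟨h, DirHG.rtg_symm h⟩
      · have h := DirHG.walkToPath hr hs hw
        simp only [DirHG.cop, if_true, if_false] at h
        exact ⟨DirHG.rtg_symm h, h⟩
    have copLink : ∀ (u : V) (b b' : Bool) (e e' : Fin N),
        u ∈ G.side b e → u ∈ G.side b' e' →
        Relation.ReflTransGen G.tensorAdj (DirHG.cop u b) (DirHG.cop u b') := by
      intro u b b' e e' hu hu'
      cases b <;> cases b' <;>
        simp only [DirHG.side, if_true, if_false] at hu hu' <;>
        simp only [DirHG.cop, if_true, if_false]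
      · exact Relation.ReflTransGen.refl
      · exact (crossAll u e' e hu' hu).2
      · exact (crossAll u e e' hu hu').1
      · exact Relation.ReflTransGen.refl
    rintro a b ⟨ea, ha⟩ ⟨eb, hb⟩
    by_cases hab : a = b
    · subst hab; exact Relation.ReflTransGen.refl
    have ha' := (G.splitMem_iff a ea).1 ha
    have hb' := (G.splitMem_iff b eb).1 hb
    by_cases hv : DirHG.vtx a = DirHG.vtx b
    · have h := copLink (DirHG.vtx a) (DirHG.tg a) (DirHG.tg b) ea eb ha' (hv ▸ hb')
      rw [DirHG.cop_vtx_tg] at h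
      rw [hv, DirHG.cop_vtx_tg] at h
      exact h
    · obtain ⟨bu, bv, L, hw⟩ := AC.1 (DirHG.vtx a) (DirHG.vtx b) hv
        ⟨ea, by rcases ht : DirHG.tg a with _ | _ <;> [exact Or.inr (by simpa [DirHG.side, ht] using ha'); exact Or.inl (by simpa [DirHG.side, ht] using ha')]⟩
        ⟨eb, by rcases ht : DirHG.tg b with _ | _ <;> [exact Or.inr (by simpa [DirHG.side, ht] using hb'); exact Or.inl (by simpa [DirHG.side, ht] using hb')]⟩
      obtain ⟨⟨e1, h1⟩, ⟨e2, h2⟩⟩ := DirHG.walk_ends hw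
      have p1 := copLink (DirHG.vtx a) (DirHG.tg a) bu ea e1 ha' h1
      have p2 := DirHG.walkToPath hr hs hw
      have p3 := copLink (DirHG.vtx b) bv (DirHG.tg b) e2 eb h2 hb'
      rw [DirHG.cop_vtx_tg] at p1
      rw [DirHG.cop_vtx_tg] at p3
      exact (p1.trans p2).trans p3
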